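/- A ring R is Zhou nil-clean if and only if every element of R is the sum of a 5-potent and a nilpotent that commute with each other. -/

import Mathlib

section Newton
variable {S : Type*} [CommRing S]

private lemma exists_inv_of_pow_sub_one_nilpotent {D : S} {k : ℕ} (hk : k ≠ 0)
    (h : IsNilpotent (D ^ k - 1)) : ∃ c : S, c * D = 1 := by
  have hu : IsUnit (D ^ k) := by
    have h1 := h.isUnit_one_add
    have e : (1 : S) + (D ^ k - 1) = D ^ k := by ring
    rwa [e] at h1
  obtain ⟨u, hu⟩ := hu
  refine ⟨↑u⁻¹ * D ^ (k - 1), ?_⟩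
  have h2 : (↑u⁻¹ : S) * D ^ k = 1 := by rw [← hu]; exact u.inv_mul
  calc (↑u⁻¹ : S) * D ^ (k - 1) * D = ↑u⁻¹ * (D ^ (k-1) * D) := by ring
    _ = ↑u⁻¹ * D ^ k := by rw [← pow_succ]; congr 2; omega
    _ = 1 := h2

private lemma newton_lift (k : ℕ) (hk : 2 ≤ k) (Ctx : S → Prop)
    (hCtx : ∀ t u : S, Ctx t → IsNilpotent u → Ctx (t - u))
    (dF : S → S) (G : S → S → S)
    (hTaylor : ∀ t y : S, (t + y) ^ k - (t + y) = (t ^ k - t) + dF t * y + y ^ 2 * G t y)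
    (hUnit : ∀ t : S, Ctx t → IsNilpotent (t ^ k - t) → ∃ c, c * dF t = 1)
    (hAnn : ∀ t z : S, t * z = 0 → (t ^ k - t) * z = 0) :
    ∀ (n : ℕ) (t : S), Ctx t → (t ^ k - t) ^ n = 0 →
      ∃ q : S, q ^ k = q ∧ IsNilpotent (t - q) ∧ ∀ z, t * z = 0 → q * z = 0 := by
  intro n
  induction n using Nat.strong_induction_on with
  | _ n IH =>
  intro t hC hfn
  match n, hfn with
  | 0, hfn =>
    have h01 : (1 : S) = 0 := by simpa using hfn
    have hall : ∀ x : S, x = 0 := fun x => by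
      calc x = x * 1 := by ring
        _ = x * 0 := by rw [h01]
        _ = 0 := by ring
    exact ⟨t, by rw [hall (t ^ k), hall t], ⟨1, by rw [pow_one, hall (t - t)]⟩,
      fun z _ => hall _⟩
  | 1, hfn =>
    rw [pow_one] at hfn
    exact ⟨t, sub_eq_zero.mp hfn, by simp [hfn] , fun z hz => hz⟩
  | (m+2), hfn =>
    set f := t ^ k - t with hf
    have hfnil : IsNilpotent f := ⟨m + 2, hfn⟩
    obtain ⟨c, hc⟩ := hUnit t hC hfnil
    set t' := t - f * c with ht'
    have e1 : t + -(f * c) = t' := by rw [ht']; ring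
    have e2 := hTaylor t (-(f * c))
    rw [e1] at e2
    have key : t' ^ k - t' = f ^ 2 * (c ^ 2 * G t (-(f * c))) := by
      linear_combination e2 - f * hc
    have hlt : (m + 3) / 2 < m + 2 := by omega
    have h2 : (t' ^ k - t') ^ ((m + 3) / 2) = 0 := by
      rw [key, mul_pow, ← pow_mul]
      have he : 2 * ((m + 3) / 2) = (m + 2) + (2 * ((m + 3) / 2) - (m + 2)) := by omega
      rw [he, pow_add, hfn, zero_mul, zero_mul]
    have hfcnil : IsNilpotent (f * c) := (Commute.all f c).isNilpotent_mul_right hfnil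
    have hC' : Ctx t' := hCtx t (f * c) hC hfcnil
    obtain ⟨Q, hQ1, hQ2, hQ3⟩ := IH ((m + 3) / 2) hlt t' hC' h2
    refine ⟨Q, hQ1, ?_, ?_⟩
    · have : t - Q = (f * c) + (t' - Q) := by rw [ht']; ring
      rw [this]
      exact (Commute.all _ _).isNilpotent_add hfcnil hQ2
    · intro z hz
      have hfz := hAnn t z hz
      have ht'z : t' * z = 0 := by
        have : t' * z = t * z - c * ((t ^ k - t) * z) := by rw [ht']; ring
        rw [this, hz, hfz, mul_zero, sub_zero]
      exact hQ3 z ht'z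

end Newton

section Lifts
variable {S : Type*} [CommRing S]

private lemma lift2 (x : S) (hf : IsNilpotent (x ^ 2 - x)) :
    ∃ q : S, q ^ 2 = q ∧ IsNilpotent (x - q) ∧ ∀ z, x * z = 0 → q * z = 0 := by
  obtain ⟨n, hn⟩ := hf
  refine newton_lift 2 le_rfl (fun _ => True) (fun _ _ _ _ => trivial)
    (fun t => 2 * t - 1) (fun _ _ => 1) (fun t y => by ring) ?_ ?_ n x trivial hn
  · intro t _ hnil
    refine exists_inv_of_pow_sub_one_nilpotent (two_ne_zero) ?_
    have e : (2 * t - 1) ^ 2 - 1 = 4 * (t ^ 2 - t) := by ring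
    rw [e]
    exact (Commute.all _ _).isNilpotent_mul_left hnil
  · intro t z h
    linear_combination (t - 1) * h

private lemma lift3 (x : S) (hf : IsNilpotent (x ^ 3 - x)) (h15 : IsNilpotent (15 * x)) :
    ∃ q : S, q ^ 3 = q ∧ IsNilpotent (x - q) ∧ ∀ z, x * z = 0 → q * z = 0 := by
  obtain ⟨n, hn⟩ := hf
  refine newton_lift 3 (by norm_num) (fun t => IsNilpotent (15 * t)) ?_
    (fun t => 3 * t ^ 2 - 1) (fun t y => 3 * t + y) (fun t y => by ring) ?_ ?_ n x h15 hn
  · intro t u hC hu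
    have e : 15 * (t - u) = 15 * t - 15 * u := by ring
    rw [e]
    exact (Commute.all _ _).isNilpotent_sub hC ((Commute.all _ _).isNilpotent_mul_left hu)
  · intro t hC hnil
    refine exists_inv_of_pow_sub_one_nilpotent (by norm_num) (k := 4) ?_
    have e : (3 * t ^ 2 - 1) ^ 4 - 1
        = (t ^ 3 - t) * (81 * t ^ 5 - 27 * t ^ 3 + 27 * t) + (15 * t) * t := by ring
    rw [e]
    exact (Commute.all _ _).isNilpotent_add
      ((Commute.all _ _).isNilpotent_mul_right hnil)
      ((Commute.all _ _).isNilpotent_mul_right hC)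
  · intro t z h
    linear_combination (t ^ 2 - 1) * h

private lemma lift5 (x : S) (hf : IsNilpotent (x ^ 5 - x)) (h15 : IsNilpotent (15 * x)) :
    ∃ q : S, q ^ 5 = q ∧ IsNilpotent (x - q) ∧ ∀ z, x * z = 0 → q * z = 0 := by
  obtain ⟨n, hn⟩ := hf
  refine newton_lift 5 (by norm_num) (fun t => IsNilpotent (15 * t)) ?_
    (fun t => 5 * t ^ 4 - 1) (fun t y => 10 * t ^ 3 + 10 * t ^ 2 * y + 5 * t * y ^ 2 + y ^ 3)
    (fun t y => by ring) ?_ ?_ n x h15 hn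
  · intro t u hC hu
    have e : 15 * (t - u) = 15 * t - 15 * u := by ring
    rw [e]
    exact (Commute.all _ _).isNilpotent_sub hC ((Commute.all _ _).isNilpotent_mul_left hu)
  · intro t hC hnil
    refine exists_inv_of_pow_sub_one_nilpotent (by norm_num) (k := 2) ?_
    have e : (5 * t ^ 4 - 1) ^ 2 - 1
        = (t ^ 5 - t) * (25 * t ^ 3) + (15 * t) * t ^ 3 := by ring
    rw [e]
    exact (Commute.all _ _).isNilpotent_add
      ((Commute.all _ _).isNilpotent_mul_right hnil)
      ((Commute.all _ _).isNilpotent_mul_right hC)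
  · intro t z h
    linear_combination (t ^ 4 - 1) * h

private lemma idem_pow_succ (e : S) (he : e * e = e) : ∀ n : ℕ, e ^ (n + 1) = e := by
  intro n
  induction n with
  | zero => rw [pow_one]
  | succ m ih => rw [pow_succ, ih, he]

private lemma nil_of_corner (c e : S) (he : e * e = e) (M : ℕ) (hM : M ≠ 0)
    (h : c ^ M * e = 0) : IsNilpotent (c * e) := by
  refine ⟨M, ?_⟩
  rw [mul_pow]
  have : e ^ M = e := by
    have := idem_pow_succ e he (M - 1)
    rwa [show M - 1 + 1 = M by omega] at this
  rw [this, h]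

private lemma bezout_split (a b : ℕ) (hab : Nat.Coprime a b) (r : S) (hr : r * r = r)
    (h : (a : S) * (b : S) * r = 0) :
    ∃ e : S, e * e = e ∧ e * r = e ∧ (a : S) * e = 0 ∧ (b : S) * (r - e) = 0 := by
  have hbez := Nat.gcd_eq_gcd_ab a b
  rw [hab] at hbez
  set U : S := ((Nat.gcdA a b : ℤ) : S)
  set V : S := ((Nat.gcdB a b : ℤ) : S)
  have hone : (a : S) * U + (b : S) * V = 1 := by
    have h' : ((1 : ℤ) : S) = ((a * Nat.gcdA a b + b * Nat.gcdB a b : ℤ) : S) :=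
      congrArg (fun z : ℤ => ((z : ℤ) : S)) hbez
    push_cast at h'
    linear_combination -h'
  refine ⟨(b : S) * V * r, ?_, ?_, ?_, ?_⟩
  · linear_combination ((b:S) * V) ^ 2 * hr + ((b:S) * V * r) * hone - U * V * h
  · linear_combination ((b:S) * V) * hr
  · linear_combination V * h
  · linear_combination U * h - ((b:S) * r) * hone
end Lifts

section Core
variable {S : Type*} [CommRing S]

private lemma nil15 (m : S) (hm : m ^ 3 = 4 * m) (h120 : IsNilpotent (120 : S)) :
    IsNilpotent (15 * m) := by
  obtain ⟨N, hN⟩ := h120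
  have mpow : ∀ k : ℕ, m ^ (2 * k + 1) = 4 ^ k * m := by
    intro k
    induction k with
    | zero => simp
    | succ n ih =>
      have e1 : 2 * (n + 1) + 1 = (2 * n + 1) + 2 := by ring
      rw [e1, pow_add, ih]
      calc 4 ^ n * m * m ^ 2 = 4 ^ n * m ^ 3 := by ring
        _ = 4 ^ (n + 1) * m := by rw [hm]; ring
  have key : (15 : S) ^ (4 * N + 1) * 4 ^ (2 * N) = (120 : S) ^ N * ((6750 : S) ^ N * 15) := by
    have hb : (15 : S) ^ 4 * (4 : S) ^ 2 = 120 * 6750 := by norm_num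
    calc (15 : S) ^ (4 * N + 1) * 4 ^ (2 * N)
        = ((15 : S) ^ 4) ^ N * 15 * ((4 : S) ^ 2) ^ N := by rw [pow_succ, pow_mul, pow_mul]
      _ = ((15 : S) ^ 4 * (4 : S) ^ 2) ^ N * 15 := by rw [mul_pow]; ring
      _ = ((120 : S) * 6750) ^ N * 15 := by rw [hb]
      _ = (120 : S) ^ N * ((6750 : S) ^ N * 15) := by rw [mul_pow]; ring
  refine ⟨4 * N + 1, ?_⟩
  calc (15 * m) ^ (4 * N + 1) = (15 : S) ^ (4 * N + 1) * m ^ (4 * N + 1) := mul_pow _ _ _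
    _ = 15 ^ (4 * N + 1) * (4 ^ (2 * N) * m) := by
        rw [show 4 * N + 1 = 2 * (2 * N) + 1 by ring, mpow]
    _ = ((15 : S) ^ (4 * N + 1) * 4 ^ (2 * N)) * m := by ring
    _ = 0 := by rw [key, hN, zero_mul, zero_mul]

/-- Forward core: 120 nilpotent and a^5 - a nilpotent gives a 5-potent decomposition. -/
private lemma fivepot_decomp (a : S) (h120 : IsNilpotent (120 : S))
    (hf : IsNilpotent (a ^ 5 - a)) : ∃ P : S, P ^ 5 = P ∧ IsNilpotent (a - P) := by
  obtain ⟨N, hN0⟩ := h120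
  set M := N + 1 with hM
  have hN : (120 : S) ^ M = 0 := by rw [hM, pow_succ, hN0, zero_mul]
  have hab : ((8 ^ M : ℕ) : S) * ((15 ^ M : ℕ) : S) * 1 = 0 := by
    push_cast
    rw [mul_one, ← mul_pow]
    norm_num
    exact hN
  obtain ⟨e, he, _, hae, hbe⟩ :=
    bezout_split (8 ^ M) (15 ^ M) (Nat.Coprime.pow M M (by norm_num : Nat.Coprime 8 15)) 1 (by ring) hab
  have hae' : (8 : S) ^ M * e = 0 := by push_cast at hae; exact hae
  have hbe' : (15 : S) ^ M * (1 - e) = 0 := by push_cast at hbe; exact hbe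
  have he5 : e ^ 5 = e := by linear_combination (e ^ 3 + e ^ 2 + e + 1) * he
  have h1e : (1 - e) * (1 - e) = 1 - e := by linear_combination he
  have h1e5 : (1 - e) ^ 5 = 1 - e := by
    linear_combination ((1 - e) ^ 3 + (1 - e) ^ 2 + (1 - e) + 1) * h1e
  set x := a * e with hx
  set y := a * (1 - e) with hy
  -- 2-part
  have h2x : IsNilpotent (2 * x) := by
    have : 2 * x = (2 * a) * e := by rw [hx]; ring
    rw [this]
    refine nil_of_corner (2 * a) e he (3 * M) (by omega) ?_
    have e1 : (2 * a) ^ (3 * M) = (8 : S) ^ M * a ^ (3 * M) := by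
      rw [mul_pow, pow_mul]; norm_num
    rw [e1, mul_right_comm, hae', zero_mul]
  have hx5 : IsNilpotent (x ^ 5 - x) := by
    have e1 : x ^ 5 - x = (a ^ 5 - a) * e := by rw [hx, mul_pow, he5]; ring
    rw [e1]
    exact (Commute.all _ _).isNilpotent_mul_right hf
  have hx2 : IsNilpotent (x ^ 2 - x) := by
    have key : (x ^ 2 - x) ^ 4 = (x ^ 5 - x) * (x ^ 3 - 4 * x ^ 2 + 6 * x - 4)
        + (2 * x) * (x ^ 3 - 2 * x ^ 2 + 3 * x - 2) := by ring
    have h4 : IsNilpotent ((x ^ 2 - x) ^ 4) := by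
      rw [key]
      exact (Commute.all _ _).isNilpotent_add
        ((Commute.all _ _).isNilpotent_mul_right hx5)
        ((Commute.all _ _).isNilpotent_mul_right h2x)
    obtain ⟨n, hn⟩ := h4
    exact ⟨4 * n, by rw [pow_mul, hn]⟩
  obtain ⟨E, hE, hxE, hEann⟩ := lift2 x hx2
  -- 15-part
  have h15y : IsNilpotent (15 * y) := by
    have : 15 * y = (15 * a) * (1 - e) := by rw [hy]; ring
    rw [this]
    refine nil_of_corner (15 * a) (1 - e) h1e M (by omega) ?_
    have e1 : (15 * a) ^ M = (15 : S) ^ M * a ^ M := mul_pow _ _ _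
    rw [e1, mul_right_comm, hbe', zero_mul]
  have hy5 : IsNilpotent (y ^ 5 - y) := by
    have e1 : y ^ 5 - y = (a ^ 5 - a) * (1 - e) := by rw [hy, mul_pow, h1e5]; ring
    rw [e1]
    exact (Commute.all _ _).isNilpotent_mul_right hf
  obtain ⟨Q, hQ, hyQ, hQann⟩ := lift5 y hy5 h15y
  -- orthogonality
  have hyx : y * x = 0 := by
    have e1 : y * x = (a * a) * (e - e * e) := by rw [hx, hy]; ring
    rw [e1, he, sub_self, mul_zero]
  have hQx : Q * x = 0 := hQann x hyx
  have hEQ : E * Q = 0 := hEann Q (by rw [mul_comm]; exact hQx)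
  refine ⟨E + Q, ?_, ?_⟩
  · linear_combination (E ^ 3 + E ^ 2 + E + 1) * hE + hQ
      + (5 * E ^ 3 + 10 * E ^ 2 * Q + 10 * E * Q ^ 2 + 5 * Q ^ 3) * hEQ
  · have e1 : a - (E + Q) = (x - E) + (y - Q) := by rw [hx, hy]; ring
    rw [e1]
    exact (Commute.all _ _).isNilpotent_add hxE hyQ

end Core

section Core2
variable {S : Type*} [CommRing S]

/-- Reverse core: a 5-potent is a sum of two tripotents and a nilpotent,
given 30 nilpotent and the extra relation. -/
private lemma trip_decomp (p : S) (h5 : p ^ 5 = p) (h30 : IsNilpotent (30 : S))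
    (hG : IsNilpotent (20 * p ^ 3 + 10 * p)) :
    ∃ q1 q2 n : S, q1 ^ 3 = q1 ∧ q2 ^ 3 = q2 ∧ IsNilpotent n ∧ p = q1 + q2 + n := by
  obtain ⟨N, hN0⟩ := h30
  set M := N + 1 with hM
  have hN : (30 : S) ^ M = 0 := by rw [hM, pow_succ, hN0, zero_mul]
  -- first split: 2 versus 15
  have hab : ((2 ^ M : ℕ) : S) * ((15 ^ M : ℕ) : S) * 1 = 0 := by
    push_cast
    rw [mul_one, ← mul_pow]
    norm_num
    exact hN
  obtain ⟨e2, hE2, _, ha2, hb2⟩ :=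
    bezout_split (2 ^ M) (15 ^ M) (Nat.Coprime.pow M M (by norm_num : Nat.Coprime 2 15))
      1 (by ring) hab
  have ha2' : (2 : S) ^ M * e2 = 0 := by push_cast at ha2; exact ha2
  have hr : (1 - e2) * (1 - e2) = 1 - e2 := by linear_combination hE2
  -- second split inside 1 - e2 : 3 versus 5
  have hab2 : ((3 ^ M : ℕ) : S) * ((5 ^ M : ℕ) : S) * (1 - e2) = 0 := by
    push_cast
    rw [← mul_pow]
    norm_num
    have : ((15 : S) ^ M) * (1 - e2) = 0 := by push_cast at hb2; exact hb2
    exact this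
  obtain ⟨e3, hE3, hE3r, ha3, hb3⟩ :=
    bezout_split (3 ^ M) (5 ^ M) (Nat.Coprime.pow M M (by norm_num : Nat.Coprime 3 5))
      (1 - e2) hr hab2
  have ha3' : (3 : S) ^ M * e3 = 0 := by push_cast at ha3; exact ha3
  set e5 : S := 1 - e2 - e3 with he5def
  have hb5' : (5 : S) ^ M * e5 = 0 := by
    have : ((5 : ℕ) : S) ^ M * ((1 - e2) - e3) = 0 := by push_cast at hb3; exact hb3
    rw [he5def]
    push_cast at this
    linear_combination this
  have hE5 : e5 * e5 = e5 := by
    rw [he5def]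
    linear_combination hr + hE3 - 2 * hE3r
  have he2e3 : e2 * e3 = 0 := by linear_combination -hE3r
  have he5e2 : e5 * e2 = 0 := by rw [he5def]; linear_combination -hE2 - he2e3
  have he5e3 : e5 * e3 = 0 := by rw [he5def]; linear_combination -hE3 - he2e3
  -- idempotent powers
  have hE2c : e2 ^ 3 = e2 := by linear_combination (e2 + 1) * hE2
  have hE3c : e3 ^ 3 = e3 := by linear_combination (e3 + 1) * hE3
  have hE5c : e5 ^ 5 = e5 := by linear_combination (e5 ^ 3 + e5 ^ 2 + e5 + 1) * hE5
  have hE2f : e2 ^ 5 = e2 := by linear_combination (e2 ^ 3 + e2 ^ 2 + e2 + 1) * hE2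
  set x2 := p * e2 with hx2
  set x3 := p * e3 with hx3
  set x5 := p * e5 with hx5
  -- 2 corner
  have hx2f : x2 ^ 5 = x2 := by rw [hx2, mul_pow, h5, hE2f]
  have h2x2 : IsNilpotent (2 * x2) := by
    have e1 : 2 * x2 = (2 * p) * e2 := by rw [hx2]; ring
    rw [e1]
    refine nil_of_corner (2 * p) e2 hE2 M (by omega) ?_
    rw [mul_pow, mul_right_comm, ha2', zero_mul]
  have hx2sq : IsNilpotent (x2 ^ 2 - x2) := by
    have key : (x2 ^ 2 - x2) ^ 4 = (x2 ^ 5 - x2) * (x2 ^ 3 - 4 * x2 ^ 2 + 6 * x2 - 4)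
        + (2 * x2) * (x2 ^ 3 - 2 * x2 ^ 2 + 3 * x2 - 2) := by ring
    have h4 : IsNilpotent ((x2 ^ 2 - x2) ^ 4) := by
      rw [key, hx2f, sub_self, zero_mul, zero_add]
      exact (Commute.all _ _).isNilpotent_mul_right h2x2
    obtain ⟨n, hn⟩ := h4
    exact ⟨4 * n, by rw [pow_mul, hn]⟩
  obtain ⟨E, hE, hx2E, hEann⟩ := lift2 x2 hx2sq
  -- 3 corner
  have h3x3 : IsNilpotent (3 * x3) := by
    have e1 : 3 * x3 = (3 * p) * e3 := by rw [hx3]; ring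
    rw [e1]
    refine nil_of_corner (3 * p) e3 hE3 M (by omega) ?_
    rw [mul_pow, mul_right_comm, ha3', zero_mul]
  have h15x3 : IsNilpotent (15 * x3) := by
    have e1 : 15 * x3 = 5 * (3 * x3) := by ring
    rw [e1]
    exact (Commute.all _ _).isNilpotent_mul_left h3x3
  have hG3 : IsNilpotent (20 * x3 ^ 3 + 10 * x3) := by
    have e1 : 20 * x3 ^ 3 + 10 * x3 = (20 * p ^ 3 + 10 * p) * e3 := by
      rw [hx3, mul_pow, hE3c]; ring
    rw [e1]
    exact (Commute.all _ _).isNilpotent_mul_right hG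
  have hx3t : IsNilpotent (x3 ^ 3 - x3) := by
    have e1 : x3 ^ 3 - x3 = 2 * (20 * x3 ^ 3 + 10 * x3) + (3 * x3) * (-13 * x3 ^ 2 - 7) := by
      ring
    rw [e1]
    exact (Commute.all _ _).isNilpotent_add
      ((Commute.all _ _).isNilpotent_mul_left hG3)
      ((Commute.all _ _).isNilpotent_mul_right h3x3)
  obtain ⟨Q3, hQ3, hx3Q3, hQ3ann⟩ := lift3 x3 hx3t h15x3
  -- 5 corner
  have h5x5 : IsNilpotent (5 * x5) := by
    have e1 : 5 * x5 = (5 * p) * e5 := by rw [hx5]; ring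
    rw [e1]
    refine nil_of_corner (5 * p) e5 hE5 M (by omega) ?_
    rw [mul_pow, mul_right_comm, hb5', zero_mul]
  have h15x5 : IsNilpotent (15 * x5) := by
    have e1 : 15 * x5 = 3 * (5 * x5) := by ring
    rw [e1]
    exact (Commute.all _ _).isNilpotent_mul_left h5x5
  have hx5f : x5 ^ 5 = x5 := by rw [hx5, mul_pow, h5, hE5c]
  set r1 := 2 * x5 - x5 ^ 3 with hr1
  set r2 := x5 ^ 3 - x5 with hr2
  have hr1t : IsNilpotent (r1 ^ 3 - r1) := by
    have e1 : r1 ^ 3 - r1 = (x5 ^ 5 - x5) * (-x5 ^ 4 + 6 * x5 ^ 2 - 13)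
        + (5 * x5) * (3 * x5 ^ 2 - 3) := by rw [hr1]; ring
    rw [e1, hx5f, sub_self, zero_mul, zero_add]
    exact (Commute.all _ _).isNilpotent_mul_right h5x5
  have hr2t : IsNilpotent (r2 ^ 3 - r2) := by
    have e1 : r2 ^ 3 - r2 = (x5 ^ 5 - x5) * (x5 ^ 4 - 3 * x5 ^ 2 + 4)
        + (5 * x5) * (1 - x5 ^ 2) := by rw [hr2]; ring
    rw [e1, hx5f, sub_self, zero_mul, zero_add]
    exact (Commute.all _ _).isNilpotent_mul_right h5x5
  have h15r1 : IsNilpotent (15 * r1) := by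
    have e1 : 15 * r1 = (15 * x5) * (2 - x5 ^ 2) := by rw [hr1]; ring
    rw [e1]
    exact (Commute.all _ _).isNilpotent_mul_right h15x5
  have h15r2 : IsNilpotent (15 * r2) := by
    have e1 : 15 * r2 = (15 * x5) * (x5 ^ 2 - 1) := by rw [hr2]; ring
    rw [e1]
    exact (Commute.all _ _).isNilpotent_mul_right h15x5
  obtain ⟨Q1, hQ1, hr1Q1, hQ1ann⟩ := lift3 r1 hr1t h15r1
  obtain ⟨Q2, hQ2, hr2Q2, hQ2ann⟩ := lift3 r2 hr2t h15r2
  -- orthogonality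
  have hx3x2 : x3 * x2 = 0 := by
    have e1 : x3 * x2 = (p * p) * (e2 * e3) := by rw [hx2, hx3]; ring
    rw [e1, he2e3, mul_zero]
  have hx5x2 : x5 * x2 = 0 := by
    have e1 : x5 * x2 = (p * p) * (e5 * e2) := by rw [hx2, hx5]; ring
    rw [e1, he5e2, mul_zero]
  have hx5x3 : x5 * x3 = 0 := by
    have e1 : x5 * x3 = (p * p) * (e5 * e3) := by rw [hx3, hx5]; ring
    rw [e1, he5e3, mul_zero]
  have hr1x2 : r1 * x2 = 0 := by
    have e1 : r1 * x2 = (x5 * x2) * (2 - x5 ^ 2) + 0 := by rw [hr1]; ring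
    rw [e1, hx5x2, zero_mul, zero_add]
  have hr1x3 : r1 * x3 = 0 := by
    have e1 : r1 * x3 = (x5 * x3) * (2 - x5 ^ 2) + 0 := by rw [hr1]; ring
    rw [e1, hx5x3, zero_mul, zero_add]
  have hEQ3 : E * Q3 = 0 := by
    have h1 : Q3 * x2 = 0 := hQ3ann x2 hx3x2
    exact hEann Q3 (by rw [mul_comm]; exact h1)
  have hEQ1 : E * Q1 = 0 := by
    have h1 : Q1 * x2 = 0 := hQ1ann x2 hr1x2
    exact hEann Q1 (by rw [mul_comm]; exact h1)
  have hQ3Q1 : Q3 * Q1 = 0 := by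
    have h1 : Q1 * x3 = 0 := hQ1ann x3 hr1x3
    exact hQ3ann Q1 (by rw [mul_comm]; exact h1)
  refine ⟨E + Q3 + Q1, Q2, p - (E + Q3 + Q1) - Q2, ?_, hQ2, ?_, by ring⟩
  · linear_combination (E + 1) * hE + hQ3 + hQ1 + (3 * E + 3 * Q3 + 6 * Q1) * hEQ3
      + (3 * E + 3 * Q1) * hEQ1 + (3 * Q3 + 3 * Q1) * hQ3Q1
  · have e1 : p - (E + Q3 + Q1) - Q2
        = ((x2 - E) + (x3 - Q3)) + ((r1 - Q1) + (r2 - Q2)) := by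
      rw [hx2, hx3, hr1, hr2, hx5, he5def]; ring
    rw [e1]
    exact (Commute.all _ _).isNilpotent_add
      ((Commute.all _ _).isNilpotent_add hx2E hx3Q3)
      ((Commute.all _ _).isNilpotent_add hr1Q1 hr2Q2)

end Core2

section Transfer
variable {R : Type*} [Ring R]

private lemma nilpotent_of_coe (T : Subring R) (x : T) (h : IsNilpotent (x : R)) :
    IsNilpotent x := by
  obtain ⟨n, hn⟩ := h
  exact ⟨n, Subtype.ext (by push_cast; exact hn)⟩

private lemma coe_nilpotent (T : Subring R) (x : T) (h : IsNilpotent x) :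
    IsNilpotent (x : R) := h.map T.subtype

@[simp] private lemma subring_coe_ofNat (T : Subring R) (n : ℕ) [n.AtLeastTwo] :
    ((no_index (OfNat.ofNat n) : T) : R) = OfNat.ofNat n := rfl

end Transfer

/-- A ring is Zhou nil-clean if every element is the sum of two tripotents
and a nilpotent that pairwise commute. -/
def ZhouNilClean (R : Type*) [Ring R] : Prop :=
  ∀ a : R, ∃ p q w : R, p ^ 3 = p ∧ q ^ 3 = q ∧ IsNilpotent w ∧
    Commute p q ∧ Commute p w ∧ Commute q w ∧ a = p + q + w

theorem stmt_11 (R : Type*) [Ring R] :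
    ZhouNilClean R ↔
      ∀ a : R, ∃ p w : R, p ^ 5 = p ∧ IsNilpotent w ∧ Commute p w ∧ a = p + w := by
  constructor
  · intro h
    have h120 : IsNilpotent (120 : R) := by
      obtain ⟨p, q, w, h1, h2, hw, hpq, hpw, hqw, heq⟩ := h 3
      have hcomm : ∀ x ∈ ({p, q, w} : Set R), ∀ y ∈ ({p, q, w} : Set R), x * y = y * x := by
        intro x hx y hy
        simp only [Set.mem_insert_iff, Set.mem_singleton_iff] at hx hy
        rcases hx with rfl | rfl | rfl <;> rcases hy with rfl | rfl | rfl <;>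
          first
            | rfl
            | exact hpq.eq | exact hpq.eq.symm | exact hpw.eq | exact hpw.eq.symm
            | exact hqw.eq | exact hqw.eq.symm
      set T := Subring.closure ({p, q, w} : Set R) with hT
      letI : CommRing T := Subring.closureCommRingOfComm hcomm
      have hpT : p ∈ T := Subring.subset_closure (by simp)
      have hqT : q ∈ T := Subring.subset_closure (by simp)
      have hwT : w ∈ T := Subring.subset_closure (by simp)
      set p' : T := ⟨p, hpT⟩ with hp'
      set q' : T := ⟨q, hqT⟩ with hq'
      set w' : T := ⟨w, hwT⟩ with hw'd
      have h1' : p' ^ 3 = p' := Subtype.ext (by push_cast [subring_coe_ofNat]; exact h1)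
      have h2' : q' ^ 3 = q' := Subtype.ext (by push_cast [subring_coe_ofNat]; exact h2)
      have hw' : IsNilpotent w' := nilpotent_of_coe T w' hw
      have hu : p' + q' = 3 - w' := Subtype.ext (by
        push_cast [subring_coe_ofNat]
        rw [eq_sub_iff_add_eq]
        exact heq.symm)
      have hL1 : (p' + q') ^ 5 - 5 * (p' + q') ^ 3 + 4 * (p' + q') = 0 := by
        linear_combination (p' ^ 2 + 5 * p' * q' + 10 * q' ^ 2 - 4) * h1'
          + (10 * p' ^ 2 + 5 * p' * q' + q' ^ 2 - 4) * h2'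
      rw [hu] at hL1
      have h120T : (120 : T)
          = w' * (274 - 225 * w' + 85 * w' ^ 2 - 15 * w' ^ 3 + w' ^ 4) := by
        linear_combination hL1
      have hnT : IsNilpotent (120 : T) := by
        rw [h120T]; exact (Commute.all _ _).isNilpotent_mul_right hw'
      have hc := coe_nilpotent T _ hnT
      rwa [subring_coe_ofNat] at hc
    intro a
    obtain ⟨p, q, w, h1, h2, hw, hpq, hpw, hqw, heq⟩ := h a
    have hcomm : ∀ x ∈ ({p, q, w} : Set R), ∀ y ∈ ({p, q, w} : Set R), x * y = y * x := by
      intro x hx y hy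
      simp only [Set.mem_insert_iff, Set.mem_singleton_iff] at hx hy
      rcases hx with rfl | rfl | rfl <;> rcases hy with rfl | rfl | rfl <;>
        first
          | rfl
          | exact hpq.eq | exact hpq.eq.symm | exact hpw.eq | exact hpw.eq.symm
          | exact hqw.eq | exact hqw.eq.symm
    set T := Subring.closure ({p, q, w} : Set R) with hT
    letI : CommRing T := Subring.closureCommRingOfComm hcomm
    have hpT : p ∈ T := Subring.subset_closure (by simp)
    have hqT : q ∈ T := Subring.subset_closure (by simp)
    have hwT : w ∈ T := Subring.subset_closure (by simp)
    set p' : T := ⟨p, hpT⟩ with hp'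
    set q' : T := ⟨q, hqT⟩ with hq'
    set w' : T := ⟨w, hwT⟩ with hw'd
    have h1' : p' ^ 3 = p' := Subtype.ext (by push_cast [subring_coe_ofNat]; exact h1)
    have h2' : q' ^ 3 = q' := Subtype.ext (by push_cast [subring_coe_ofNat]; exact h2)
    have hw' : IsNilpotent w' := nilpotent_of_coe T w' hw
    have h120T : IsNilpotent (120 : T) :=
      nilpotent_of_coe T 120 (by rw [subring_coe_ofNat]; exact h120)
    have hs : (p' + q') ^ 5 - (p' + q') = 15 * (p' * q' * (p' + q')) := by
      linear_combination (p' ^ 2 + 5 * p' * q' + 10 * q' ^ 2 + 1) * h1'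
        + (10 * p' ^ 2 + 5 * p' * q' + q' ^ 2 + 1) * h2'
    have hm : (p' * q' * (p' + q')) ^ 3 = 4 * (p' * q' * (p' + q')) := by
      linear_combination
        (q' ^ 6 + 3 * p' * q' ^ 5 + 3 * q' ^ 4 + 3 * p' ^ 2 * q' ^ 4 + p' * q' ^ 3
          + p' ^ 3 * q' ^ 3) * h1'
        + (p' * q' ^ 3 + 3 * p' ^ 2 * q' ^ 2 + 4 * p' * q' + 4 * p' ^ 2) * h2'
    have h15m := nil15 _ hm h120T
    set a' : T := p' + q' + w' with ha'
    have ha5 : IsNilpotent (a' ^ 5 - a') := by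
      have key : a' ^ 5 - a' = 15 * (p' * q' * (p' + q'))
          + w' * (5 * (p' + q') ^ 4 + 10 * (p' + q') ^ 3 * w' + 10 * (p' + q') ^ 2 * w' ^ 2
            + 5 * (p' + q') * w' ^ 3 + w' ^ 4 - 1) := by
        rw [ha']; linear_combination hs
      rw [key]
      exact (Commute.all _ _).isNilpotent_add h15m
        ((Commute.all _ _).isNilpotent_mul_right hw')
    obtain ⟨P', hP5, hPnil⟩ := fivepot_decomp a' h120T ha5
    have ha'c : ((a' : T) : R) = a := by rw [ha']; push_cast; exact heq.symm
    refine ⟨(P' : R), ((a' - P' : T) : R), ?_, ?_, ?_, ?_⟩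
    · have hc := congrArg (Subtype.val) hP5
      push_cast at hc
      exact hc
    · exact coe_nilpotent T _ hPnil
    · have hc := congrArg (Subtype.val) (mul_comm P' (a' - P'))
      push_cast at hc
      exact hc
    · push_cast
      rw [ha'c]
      abel
  · intro h
    have h30 : IsNilpotent (30 : R) := by
      obtain ⟨P, W, hP, hW, hc, heq⟩ := h 2
      have hcomm : ∀ x ∈ ({W} : Set R), ∀ y ∈ ({W} : Set R), x * y = y * x := by
        intro x hx y hy
        simp only [Set.mem_singleton_iff] at hx hy
        subst hx; subst hy; rfl
      set T := Subring.closure ({W} : Set R)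
      letI : CommRing T := Subring.closureCommRingOfComm hcomm
      have hWT : W ∈ T := Subring.subset_closure (by simp)
      set W' : T := ⟨W, hWT⟩ with hW'd
      have hW' : IsNilpotent W' := nilpotent_of_coe T W' hW
      have hPe : P = 2 - W := by rw [heq]; abel
      have hP5 : ((2 : T) - W') ^ 5 = 2 - W' := by
        apply Subtype.ext
        push_cast [subring_coe_ofNat]
        rw [← hPe]
        exact hP
      have h30T : (30 : T) = W' * (79 - 80 * W' + 40 * W' ^ 2 - 10 * W' ^ 3 + W' ^ 4) := by
        linear_combination hP5
      have hnT : IsNilpotent (30 : T) := by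
        rw [h30T]; exact (Commute.all _ _).isNilpotent_mul_right hW'
      have hcc := coe_nilpotent T _ hnT
      rwa [subring_coe_ofNat] at hcc
    intro a
    obtain ⟨p, w0, hp5, hw0, hcw0, heq⟩ := h a
    have hG1 : IsNilpotent (5 * p ^ 4 + 10 * p ^ 3 + 10 * p ^ 2 + 5 * p) := by
      obtain ⟨p1, w1, hp1, hw1, hc1, heq1⟩ := h (p + 1)
      have hp1e : p1 = p + 1 - w1 := by rw [heq1]; abel
      have hcpw1 : Commute p w1 := by
        have hpe : p = p1 + w1 - 1 := by rw [hp1e]; abel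
        rw [hpe]
        exact (hc1.add_left (Commute.refl w1)).sub_left (Commute.one_left w1)
      have hcomm : ∀ x ∈ ({p, w1} : Set R), ∀ y ∈ ({p, w1} : Set R), x * y = y * x := by
        intro x hx y hy
        simp only [Set.mem_insert_iff, Set.mem_singleton_iff] at hx hy
        rcases hx with rfl | rfl <;> rcases hy with rfl | rfl <;>
          first | rfl | exact hcpw1.eq | exact hcpw1.eq.symm
      set T := Subring.closure ({p, w1} : Set R)
      letI : CommRing T := Subring.closureCommRingOfComm hcomm
      have hpT : p ∈ T := Subring.subset_closure (by simp)
      have hwT : w1 ∈ T := Subring.subset_closure (by simp)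
      set p' : T := ⟨p, hpT⟩ with hp'
      set w1' : T := ⟨w1, hwT⟩ with hw1'
      have hp5' : p' ^ 5 = p' := Subtype.ext (by push_cast [subring_coe_ofNat]; exact hp5)
      have hw1n : IsNilpotent w1' := nilpotent_of_coe T w1' hw1
      have hyR : (p + 1 - w1) ^ 5 = p + 1 - w1 := by rw [← hp1e]; exact hp1
      have hy : (p' + 1 - w1') ^ 5 = p' + 1 - w1' :=
        Subtype.ext (by push_cast [subring_coe_ofNat]; exact hyR)
      have key : 5 * p' ^ 4 + 10 * p' ^ 3 + 10 * p' ^ 2 + 5 * p'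
          = w1' * (5 * (p' + 1 - w1') ^ 4 + 10 * (p' + 1 - w1') ^ 3 * w1'
            + 10 * (p' + 1 - w1') ^ 2 * w1' ^ 2 + 5 * (p' + 1 - w1') * w1' ^ 3
            + w1' ^ 4 - 1) := by
        linear_combination hy - hp5'
      have hnT : IsNilpotent (5 * p' ^ 4 + 10 * p' ^ 3 + 10 * p' ^ 2 + 5 * p' : T) := by
        rw [key]; exact (Commute.all _ _).isNilpotent_mul_right hw1n
      have h2 := coe_nilpotent T _ hnT
      have e : ((5 * p' ^ 4 + 10 * p' ^ 3 + 10 * p' ^ 2 + 5 * p' : T) : R)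
          = 5 * p ^ 4 + 10 * p ^ 3 + 10 * p ^ 2 + 5 * p := by
        push_cast [subring_coe_ofNat]; rfl
      rwa [e] at h2
    have hG2 : IsNilpotent (-(5 * p ^ 4) + 10 * p ^ 3 - 10 * p ^ 2 + 5 * p) := by
      obtain ⟨p1, w1, hp1, hw1, hc1, heq1⟩ := h (p - 1)
      have hp1e : p1 = p - 1 - w1 := by rw [heq1]; abel
      have hcpw1 : Commute p w1 := by
        have hpe : p = p1 + w1 + 1 := by rw [hp1e]; abel
        rw [hpe]
        exact (hc1.add_left (Commute.refl w1)).add_left (Commute.one_left w1)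
      have hcomm : ∀ x ∈ ({p, w1} : Set R), ∀ y ∈ ({p, w1} : Set R), x * y = y * x := by
        intro x hx y hy
        simp only [Set.mem_insert_iff, Set.mem_singleton_iff] at hx hy
        rcases hx with rfl | rfl <;> rcases hy with rfl | rfl <;>
          first | rfl | exact hcpw1.eq | exact hcpw1.eq.symm
      set T := Subring.closure ({p, w1} : Set R)
      letI : CommRing T := Subring.closureCommRingOfComm hcomm
      have hpT : p ∈ T := Subring.subset_closure (by simp)
      have hwT : w1 ∈ T := Subring.subset_closure (by simp)
      set p' : T := ⟨p, hpT⟩ with hp'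
      set w1' : T := ⟨w1, hwT⟩ with hw1'
      have hp5' : p' ^ 5 = p' := Subtype.ext (by push_cast [subring_coe_ofNat]; exact hp5)
      have hw1n : IsNilpotent w1' := nilpotent_of_coe T w1' hw1
      have hyR : (p - 1 - w1) ^ 5 = p - 1 - w1 := by rw [← hp1e]; exact hp1
      have hy : (p' - 1 - w1') ^ 5 = p' - 1 - w1' :=
        Subtype.ext (by push_cast [subring_coe_ofNat]; exact hyR)
      have key : -(5 * p' ^ 4) + 10 * p' ^ 3 - 10 * p' ^ 2 + 5 * p'
          = w1' * (5 * (p' - 1 - w1') ^ 4 + 10 * (p' - 1 - w1') ^ 3 * w1'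
            + 10 * (p' - 1 - w1') ^ 2 * w1' ^ 2 + 5 * (p' - 1 - w1') * w1' ^ 3
            + w1' ^ 4 - 1) := by
        linear_combination hy - hp5'
      have hnT : IsNilpotent (-(5 * p' ^ 4) + 10 * p' ^ 3 - 10 * p' ^ 2 + 5 * p' : T) := by
        rw [key]; exact (Commute.all _ _).isNilpotent_mul_right hw1n
      have h2 := coe_nilpotent T _ hnT
      have e : ((-(5 * p' ^ 4) + 10 * p' ^ 3 - 10 * p' ^ 2 + 5 * p' : T) : R)
          = -(5 * p ^ 4) + 10 * p ^ 3 - 10 * p ^ 2 + 5 * p := by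
        push_cast [subring_coe_ofNat]; rfl
      rwa [e] at h2
    -- now work in the closure of {p}
    have hcomm : ∀ x ∈ ({p} : Set R), ∀ y ∈ ({p} : Set R), x * y = y * x := by
      intro x hx y hy
      simp only [Set.mem_singleton_iff] at hx hy
      subst hx; subst hy; rfl
    set T := Subring.closure ({p} : Set R) with hT
    letI : CommRing T := Subring.closureCommRingOfComm hcomm
    have hpT : p ∈ T := Subring.subset_closure (by simp)
    set p' : T := ⟨p, hpT⟩ with hp'
    have hp5' : p' ^ 5 = p' := Subtype.ext (by push_cast [subring_coe_ofNat]; exact hp5)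
    have h30T : IsNilpotent (30 : T) :=
      nilpotent_of_coe T 30 (by rw [subring_coe_ofNat]; exact h30)
    have hg1 : IsNilpotent (5 * p' ^ 4 + 10 * p' ^ 3 + 10 * p' ^ 2 + 5 * p' : T) := by
      refine nilpotent_of_coe T _ ?_
      have e : ((5 * p' ^ 4 + 10 * p' ^ 3 + 10 * p' ^ 2 + 5 * p' : T) : R)
          = 5 * p ^ 4 + 10 * p ^ 3 + 10 * p ^ 2 + 5 * p := by
        push_cast [subring_coe_ofNat]; rfl
      rw [e]; exact hG1
    have hg2 : IsNilpotent (-(5 * p' ^ 4) + 10 * p' ^ 3 - 10 * p' ^ 2 + 5 * p' : T) := by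
      refine nilpotent_of_coe T _ ?_
      have e : ((-(5 * p' ^ 4) + 10 * p' ^ 3 - 10 * p' ^ 2 + 5 * p' : T) : R)
          = -(5 * p ^ 4) + 10 * p ^ 3 - 10 * p ^ 2 + 5 * p := by
        push_cast [subring_coe_ofNat]; rfl
      rw [e]; exact hG2
    have hGT : IsNilpotent (20 * p' ^ 3 + 10 * p' : T) := by
      have e : (20 * p' ^ 3 + 10 * p' : T)
          = (5 * p' ^ 4 + 10 * p' ^ 3 + 10 * p' ^ 2 + 5 * p')
            + (-(5 * p' ^ 4) + 10 * p' ^ 3 - 10 * p' ^ 2 + 5 * p') := by ring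
      rw [e]
      exact (Commute.all _ _).isNilpotent_add hg1 hg2
    obtain ⟨q1', q2', n', hq1, hq2, hn, heqT⟩ := trip_decomp p' hp5' h30T hGT
    have hcent : ∀ x : T, Commute ((x : R)) w0 := by
      have hle : T ≤ Subring.centralizer ({w0} : Set R) := by
        rw [hT]
        apply Subring.closure_le.mpr
        intro z hz
        simp only [Set.mem_singleton_iff] at hz
        subst hz
        rw [SetLike.mem_coe, Subring.mem_centralizer_iff]
        intro g hg
        simp only [Set.mem_singleton_iff] at hg
        subst hg
        exact hcw0.eq.symm
      intro x
      have hx := Subring.mem_centralizer_iff.mp (hle x.2) w0 (by simp)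
      exact (show Commute w0 (x : R) from hx).symm
    refine ⟨(q1' : R), (q2' : R), (n' : R) + w0, ?_, ?_, ?_, ?_, ?_, ?_, ?_⟩
    · have hc := congrArg (Subtype.val) hq1
      push_cast at hc
      exact hc
    · have hc := congrArg (Subtype.val) hq2
      push_cast at hc
      exact hc
    · exact (hcent n').isNilpotent_add (coe_nilpotent T _ hn) hw0
    · have hc := congrArg (Subtype.val) (mul_comm q1' q2')
      push_cast at hc
      exact hc
    · have hc := congrArg (Subtype.val) (mul_comm q1' n')
      push_cast at hc
      exact (show Commute (q1' : R) (n' : R) from hc).add_right (hcent q1')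
    · have hc := congrArg (Subtype.val) (mul_comm q2' n')
      push_cast at hc
      exact (show Commute (q2' : R) (n' : R) from hc).add_right (hcent q2')
    · rw [heq, show p = ((q1' + q2' + n' : T) : R) from congrArg Subtype.val heqT]
      push_cast
      abel
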